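/- Let n ≥ 2 and p ≥ 1, let G_1,…,G_n be vertex-disjoint finite simple graphs where {u_{i,1},…,u_{i,p}} is a clique of size p in G_i for each i, and let G be the corresponding K_p-gluing obtained by identifying u_{1,q},…,u_{n,q} into a single vertex u_q for each q ∈ {1,…,p}. Fix m ≥ 1 and suppose that for each i ∈ {1,…,n} there is an integer k_i ≥ 0 such that for every m-fold cover (K_i,D_i) of G_i and every set A ⊆ ⋃_{q=1}^{p} K_i(u_{i,q}) with |A ∩ K_i(u_{i,q})| = 1 for each q and A independent in D_i, the number of (K_i,D_i)-colorings of G_i containing A is at least k_i. Then P_DP(G,m) ≥ (∏_{i=0}^{p-1} (m - i)) · (∏_{i=1}^{n} k_i). -/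

import Mathlib

open SimpleGraph Finset

/-- A (standardized) `m`-fold cover of a graph `G`: the vertex set of the cover graph `H`
is `V × Fin m`, where the fiber (list) of a vertex `v` is `L v = {v} × Fin m`.
Every `m`-fold cover in the sense of Dvořák–Postle is isomorphic to one of this form. -/
structure DPCover {V : Type} (G : SimpleGraph V) (m : ℕ) where
  /-- the cover graph -/
  H : SimpleGraph (V × Fin m)
  /-- each fiber induces a complete graph -/
  fiber_complete : ∀ (v : V) (i j : Fin m), i ≠ j → H.Adj (v, i) (v, j)
  /-- cross-edges only join fibers of adjacent vertices -/
  cross : ∀ (u v : V) (i j : Fin m), H.Adj (u, i) (v, j) → u = v ∨ G.Adj u v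
  /-- the cross-edges between the fibers of two adjacent vertices form a matching -/
  matching : ∀ (u v : V), G.Adj u v → ∀ (i j j' : Fin m),
      H.Adj (u, i) (v, j) → H.Adj (u, i) (v, j') → j = j'

/-- `f` encodes an `(L,H)`-coloring of `G`, i.e. the set `{(v, f v) : v ∈ V}` is independent
in the cover graph. -/
def DPCover.IsColoring {V : Type} {G : SimpleGraph V} {m : ℕ} (C : DPCover G m)
    (f : V → Fin m) : Prop :=
  ∀ u v : V, ¬ C.H.Adj (u, f u) (v, f v)

/-- `P_DP(G, (L,H))`: the number of `(L,H)`-colorings of `G`. -/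
noncomputable def DPCover.count {V : Type} [Fintype V] {G : SimpleGraph V} {m : ℕ}
    (C : DPCover G m) : ℕ :=
  Nat.card { f : V → Fin m // C.IsColoring f }

/-- `N((v,j), (L,H))`: the number of `(L,H)`-colorings of `G` containing the vertex `(v, j)`. -/
noncomputable def DPCover.countAt {V : Type} [Fintype V] {G : SimpleGraph V} {m : ℕ}
    (C : DPCover G m) (v : V) (j : Fin m) : ℕ :=
  Nat.card { f : V → Fin m // C.IsColoring f ∧ f v = j }

/-- The DP color function `P_DP(G, m)`. -/
noncomputable def PDP {V : Type} [Fintype V] (G : SimpleGraph V) (m : ℕ) : ℕ :=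
  sInf { n : ℕ | ∃ C : DPCover G m, n = C.count }

/-- The chromatic polynomial `P(G, m)`: the number of proper colorings with colors in `Fin m`. -/
noncomputable def chromPoly {V : Type} [Fintype V] (G : SimpleGraph V) (m : ℕ) : ℕ :=
  Nat.card { f : V → Fin m // ∀ u v : V, G.Adj u v → f u ≠ f v }

/-- The DP color function threshold `τ_DP(G)`: the least `N ≥ χ(G)` such that
`P_DP(G,m) = P(G,m)` for all `m ≥ N` (and `∞` if there is no such `N`). -/
noncomputable def tauDP {V : Type} [Fintype V] (G : SimpleGraph V) : ℕ∞ :=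
  sInf { N : ℕ∞ | ∃ n : ℕ, N = (n : ℕ∞) ∧ G.chromaticNumber ≤ (n : ℕ∞) ∧
      ∀ m : ℕ, n ≤ m → PDP G m = chromPoly G m }

/-- The join `G ∨ K` of two vertex-disjoint graphs. -/
def joinG {α β : Type} (G : SimpleGraph α) (K : SimpleGraph β) : SimpleGraph (α ⊕ β) where
  Adj x y := match x, y with
    | Sum.inl a, Sum.inl a' => G.Adj a a'
    | Sum.inr b, Sum.inr b' => K.Adj b b'
    | Sum.inl _, Sum.inr _ => True
    | Sum.inr _, Sum.inl _ => True
  symm := by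
    refine ⟨?_⟩
    rintro (a | b) (a' | b') h
    · exact h.symm
    · trivial
    · trivial
    · exact h.symm
  loopless := by
    refine ⟨?_⟩
    rintro (a | b) h
    · exact G.loopless.irrefl a h
    · exact K.loopless.irrefl b h

/-- The vertex-gluing of graphs `G i` at the vertices `u i`: identify all the `u i` into a
single vertex (represented by `none`). -/
def VGlue {n : ℕ} {V : Fin n → Type} (G : ∀ i, SimpleGraph (V i)) (u : ∀ i, V i) :
    SimpleGraph (Option (Σ i : Fin n, {x : V i // x ≠ u i})) where
  Adj a b := match a, b with
    | none, none => False
    | none, some ⟨i, x⟩ => (G i).Adj (u i) x.val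
    | some ⟨i, x⟩, none => (G i).Adj x.val (u i)
    | some ⟨i, x⟩, some ⟨j, y⟩ => ∃ h : i = j, (G j).Adj (cast (congrArg V h) x.val) y.val
  symm := by
    refine ⟨?_⟩
    rintro (_ | ⟨i, x⟩) (_ | ⟨j, y⟩) h
    · exact h.elim
    · exact h.symm
    · exact h.symm
    · obtain ⟨rfl, h⟩ := h
      exact ⟨rfl, h.symm⟩
  loopless := by
    refine ⟨?_⟩
    rintro (_ | ⟨i, x⟩) h
    · exact h
    · obtain ⟨h', h⟩ := h
      exact (G i).loopless.irrefl x.val h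

/-- The `K_p`-gluing of graphs `G i`, each with a chosen `p`-clique `U i 0, …, U i (p-1)`:
the cliques are identified coordinatewise (the glued clique is `Sum.inl (Fin p)`). -/
def KGlue {n p : ℕ} {V : Fin n → Type} (G : ∀ i, SimpleGraph (V i))
    (U : ∀ i, Fin p → V i) :
    SimpleGraph ((Fin p) ⊕ (Σ i : Fin n, {x : V i // ∀ q, x ≠ U i q})) where
  Adj a b := match a, b with
    | Sum.inl q, Sum.inl q' => q ≠ q'
    | Sum.inl q, Sum.inr ⟨i, x⟩ => (G i).Adj (U i q) x.val
    | Sum.inr ⟨i, x⟩, Sum.inl q => (G i).Adj x.val (U i q)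
    | Sum.inr ⟨i, x⟩, Sum.inr ⟨j, y⟩ => ∃ h : i = j, (G j).Adj (cast (congrArg V h) x.val) y.val
  symm := by
    refine ⟨?_⟩
    rintro (q | ⟨i, x⟩) (q' | ⟨j, y⟩) h
    · exact h.symm
    · exact h.symm
    · exact h.symm
    · obtain ⟨rfl, h⟩ := h
      exact ⟨rfl, h.symm⟩
  loopless := by
    refine ⟨?_⟩
    rintro (q | ⟨i, x⟩) h
    · exact h rfl
    · obtain ⟨h', h⟩ := h
      exact (G i).loopless.irrefl x.val h

/-- The disjoint union of a family of graphs. -/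
def sigmaG {n : ℕ} {V : Fin n → Type} (G : ∀ i, SimpleGraph (V i)) :
    SimpleGraph (Σ i : Fin n, V i) where
  Adj a b := ∃ h : a.1 = b.1, (G b.1).Adj (cast (congrArg V h) a.2) b.2
  symm := by
    refine ⟨?_⟩
    rintro ⟨i, x⟩ ⟨j, y⟩ ⟨h1, h2⟩
    dsimp only at h1 h2 ⊢
    subst h1
    exact ⟨rfl, h2.symm⟩
  loopless := by
    refine ⟨?_⟩
    rintro ⟨i, x⟩ ⟨h1, h2⟩
    dsimp only at h2
    exact (G i).loopless.irrefl x h2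

/-- chordal: every cycle of length at least `4` has a chord, i.e. an edge of the graph
joining two vertices of the cycle that is not an edge of the cycle. -/
def IsChordal {V : Type} (G : SimpleGraph V) : Prop :=
  ∀ (v : V) (w : G.Walk v v), w.IsCycle → 4 ≤ w.length →
    ∃ x y, x ∈ w.support ∧ y ∈ w.support ∧ G.Adj x y ∧ s(x, y) ∉ w.edges



/-! ### Auxiliary material for `stmt_4` -/

/-- A trivial cover (only fiber edges), witnessing that covers always exist. -/
def trivialCover {W : Type} (G : SimpleGraph W) (m : ℕ) : DPCover G m where
  H := { Adj := fun w z => w.1 = z.1 ∧ w ≠ z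
         symm := ⟨fun w z h => ⟨h.1.symm, h.2.symm⟩⟩
         loopless := ⟨fun w h => h.2 rfl⟩ }
  fiber_complete := fun v i j hij => ⟨rfl, fun he => hij (congrArg Prod.snd he)⟩
  cross := fun u v i j h => Or.inl h.1
  matching := fun u v huv i j j' h _ => absurd h.1 huv.ne

lemma natCard_sigma {ι : Type} [Fintype ι] {f : ι → Type} [∀ i, Finite (f i)] :
    Nat.card (Σ i, f i) = ∑ i, Nat.card (f i) := by
  classical
  letI : ∀ i, Fintype (f i) := fun i => Fintype.ofFinite _
  simp [Nat.card_eq_fintype_card]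

section IndepCount

variable {p m : ℕ}

lemma good_card (hm : 0 < m) (R : Fin p → Fin m → Fin p → Fin m → Prop)
    (Rsymm : ∀ q i q' j, R q i q' j → R q' j q i)
    (Rmatch : ∀ q q' : Fin p, q ≠ q' → ∀ i j j', R q i q' j → R q i q' j' → j = j')
    (s : Finset (Fin p)) :
    ∏ q ∈ Finset.range s.card, (m - q) ≤ Nat.card
      {a : Fin p → Fin m // (∀ q ∈ s, ∀ q' ∈ s, q ≠ q' → ¬ R q (a q) q' (a q')) ∧
        ∀ q ∉ s, a q = ⟨0, hm⟩} := by
  classical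
  set d0 : Fin m := ⟨0, hm⟩ with hd0
  induction s using Finset.induction_on with
  | empty =>
      haveI : Nonempty {a : Fin p → Fin m //
          (∀ q ∈ (∅ : Finset (Fin p)), ∀ q' ∈ (∅ : Finset (Fin p)), q ≠ q' →
            ¬ R q (a q) q' (a q')) ∧ ∀ q ∉ (∅ : Finset (Fin p)), a q = d0} :=
        ⟨⟨fun _ => d0, fun q hq => absurd hq (Finset.notMem_empty q), fun q _ => rfl⟩⟩
      simp only [Finset.card_empty, Finset.range_zero, Finset.prod_empty]
      exact Nat.card_pos
  | @insert q0 s hq0 ih =>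
      rw [Nat.card_eq_fintype_card, Fintype.card_subtype] at ih ⊢
      set FI : Finset (Fin p → Fin m) := Finset.univ.filter (fun a =>
        (∀ q ∈ insert q0 s, ∀ q' ∈ insert q0 s, q ≠ q' → ¬ R q (a q) q' (a q')) ∧
        ∀ q ∉ insert q0 s, a q = d0) with hFI
      set Fs : Finset (Fin p → Fin m) := Finset.univ.filter (fun a =>
        (∀ q ∈ s, ∀ q' ∈ s, q ≠ q' → ¬ R q (a q) q' (a q')) ∧
        ∀ q ∉ s, a q = d0) with hFs
      have hmapsto : ∀ a ∈ FI, Function.update a q0 d0 ∈ Fs := by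
        intro a ha
        rw [hFI, Finset.mem_filter] at ha
        obtain ⟨-, ha1, ha2⟩ := ha
        rw [hFs, Finset.mem_filter]
        refine ⟨Finset.mem_univ _, ?_, ?_⟩
        · intro q hq q' hq' hne
          have hq0q : q ≠ q0 := fun h => hq0 (h ▸ hq)
          have hq0q' : q' ≠ q0 := fun h => hq0 (h ▸ hq')
          rw [Function.update_of_ne hq0q, Function.update_of_ne hq0q']
          exact ha1 q (Finset.mem_insert_of_mem hq) q' (Finset.mem_insert_of_mem hq') hne
        · intro q hq
          by_cases hqq0 : q = q0
          · subst hqq0; rw [Function.update_self]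
          · rw [Function.update_of_ne hqq0]
            exact ha2 q (fun h => (Finset.mem_insert.mp h).elim hqq0 hq)
      rw [Finset.card_eq_sum_card_fiberwise hmapsto,
        Finset.card_insert_of_notMem hq0, Finset.prod_range_succ]
      have hfiber : ∀ b ∈ Fs, m - s.card ≤
          (FI.filter (fun a => Function.update a q0 d0 = b)).card := by
        intro b hb
        rw [hFs, Finset.mem_filter] at hb
        obtain ⟨-, hb1, hb2⟩ := hb
        have hb0 : b q0 = d0 := hb2 q0 hq0
        set gJ : Finset (Fin m) := Finset.univ.filter
          (fun j => ∀ q' ∈ s, ¬ R q' (b q') q0 j) with hgJ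
        have h1 : m - s.card ≤ gJ.card := by
          set bJ : Finset (Fin m) := Finset.univ.filter
            (fun j => ¬ ∀ q' ∈ s, ¬ R q' (b q') q0 j) with hbJ
          have hsplit : gJ.card + bJ.card = m := by
            rw [hgJ, hbJ, Finset.card_filter_add_card_filter_not]
            simp
          have hbound : bJ.card ≤ s.card := by
            have hsub : bJ ⊆ s.biUnion (fun q' =>
                Finset.univ.filter (fun j => R q' (b q') q0 j)) := by
              intro j hj
              rw [hbJ, Finset.mem_filter] at hj
              obtain ⟨-, hj⟩ := hj
              push_neg at hj
              obtain ⟨q', hq', hR⟩ := hj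
              exact Finset.mem_biUnion.mpr ⟨q', hq',
                Finset.mem_filter.mpr ⟨Finset.mem_univ _, hR⟩⟩
            calc bJ.card ≤ _ := Finset.card_le_card hsub
              _ ≤ ∑ q' ∈ s, (Finset.univ.filter (fun j => R q' (b q') q0 j)).card :=
                Finset.card_biUnion_le
              _ ≤ ∑ _q' ∈ s, 1 := by
                refine Finset.sum_le_sum ?_
                intro q' hq'
                refine Finset.card_le_one.mpr ?_
                intro j hj j' hj'
                rw [Finset.mem_filter] at hj hj'
                exact Rmatch q' q0 (fun h => hq0 (h ▸ hq')) (b q') j j' hj.2 hj'.2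
              _ = s.card := by simp
          omega
        have h2 : gJ.card ≤ (FI.filter (fun a => Function.update a q0 d0 = b)).card := by
          refine Finset.card_le_card_of_injOn (fun j => Function.update b q0 j) ?_ ?_
          · intro j hj
            rw [hgJ, Finset.mem_coe, Finset.mem_filter] at hj
            obtain ⟨-, hj⟩ := hj
            rw [Finset.mem_coe, Finset.mem_filter]
            refine ⟨?_, ?_⟩
            · rw [hFI, Finset.mem_filter]
              refine ⟨Finset.mem_univ _, ?_, ?_⟩
              · intro q hq q' hq' hne hR
                rcases Finset.mem_insert.mp hq with h1 | h1
                · rcases Finset.mem_insert.mp hq' with h2 | h2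
                  · exact hne (h1.trans h2.symm)
                  · have hq'0 : q' ≠ q0 := fun h => hq0 (h ▸ h2)
                    rw [h1] at hR
                    simp only [Function.update_self, Function.update_of_ne hq'0] at hR
                    exact hj q' h2 (Rsymm _ _ _ _ hR)
                · rcases Finset.mem_insert.mp hq' with h2 | h2
                  · have hqne0 : q ≠ q0 := fun h => hq0 (h ▸ h1)
                    rw [h2] at hR
                    simp only [Function.update_of_ne hqne0, Function.update_self] at hR
                    exact hj q h1 hR
                  · have hqne0 : q ≠ q0 := fun h => hq0 (h ▸ h1)
                    have hq'ne0 : q' ≠ q0 := fun h => hq0 (h ▸ h2)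
                    simp only [Function.update_of_ne hqne0, Function.update_of_ne hq'ne0] at hR
                    exact hb1 q h1 q' h2 hne hR
              · intro q hq
                have hqne0 : q ≠ q0 := fun h => hq (h ▸ Finset.mem_insert_self q0 s)
                simp only [Function.update_of_ne hqne0]
                exact hb2 q (fun h => hq (Finset.mem_insert_of_mem h))
            · rw [Function.update_idem, ← hb0, Function.update_eq_self]
          · intro j _ j' _ h
            have := congrFun h q0
            simpa using this
        exact h1.trans h2
      calc (∏ q ∈ Finset.range s.card, (m - q)) * (m - s.card)
          ≤ Fs.card * (m - s.card) := Nat.mul_le_mul_right _ ih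
        _ = ∑ _b ∈ Fs, (m - s.card) := by rw [Finset.sum_const, smul_eq_mul]
        _ ≤ _ := Finset.sum_le_sum hfiber

lemma indep_card (hm : 0 < m) (R : Fin p → Fin m → Fin p → Fin m → Prop)
    (Rsymm : ∀ q i q' j, R q i q' j → R q' j q i)
    (Rmatch : ∀ q q' : Fin p, q ≠ q' → ∀ i j j', R q i q' j → R q i q' j' → j = j') :
    ∏ q ∈ Finset.range p, (m - q) ≤ Nat.card
      {a : Fin p → Fin m // ∀ q q', q ≠ q' → ¬ R q (a q) q' (a q')} := by
  classical
  have h := good_card hm R Rsymm Rmatch Finset.univ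
  rw [Finset.card_univ, Fintype.card_fin] at h
  refine h.trans ?_
  rw [Nat.card_eq_fintype_card, Nat.card_eq_fintype_card,
    Fintype.card_subtype, Fintype.card_subtype]
  refine Finset.card_le_card ?_
  intro a ha
  rw [Finset.mem_filter] at ha ⊢
  exact ⟨ha.1, fun q q' h' => ha.2.1 q (Finset.mem_univ q) q' (Finset.mem_univ q') h'⟩

end IndepCount

section Glue

variable {n p : ℕ} {V : Fin n → Type} [∀ i, Fintype (V i)] [∀ i, DecidableEq (V i)]
  (G : ∀ i, SimpleGraph (V i)) (U : ∀ i, Fin p → V i)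

/-- The canonical embedding of the vertices of `G i` into the `K_p`-gluing. -/
noncomputable def gEmb (i : Fin n) (x : V i) :
    (Fin p) ⊕ (Σ i : Fin n, {x : V i // ∀ q, x ≠ U i q}) :=
  if h : ∃ q, x = U i q then Sum.inl h.choose
  else Sum.inr ⟨i, x, fun q hq => h ⟨q, hq⟩⟩

variable (hclique : ∀ i, ∀ q q' : Fin p, q ≠ q' → (G i).Adj (U i q) (U i q'))

include hclique in
lemma U_inj (i : Fin n) : Function.Injective (U i) := by
  intro q q' h
  by_contra hne
  have := hclique i q q' hne
  rw [h] at this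
  exact (G i).loopless.irrefl _ this

include hclique in
lemma gEmb_U (i : Fin n) (q : Fin p) : gEmb U i (U i q) = Sum.inl q := by
  have h : ∃ q', U i q = U i q' := ⟨q, rfl⟩
  rw [gEmb, dif_pos h]
  exact congrArg Sum.inl (U_inj G U hclique i h.choose_spec).symm

lemma gEmb_not (i : Fin n) (x : V i) (hx : ∀ q, x ≠ U i q) :
    gEmb U i x = Sum.inr ⟨i, x, hx⟩ := by
  rw [gEmb, dif_neg]
  rintro ⟨q, hq⟩
  exact hx q hq

include hclique in
lemma gEmb_inj (i : Fin n) : Function.Injective (gEmb U i) := by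
  intro x y h
  by_cases hx : ∃ q, x = U i q <;> by_cases hy : ∃ q, y = U i q
  · obtain ⟨qx, hqx⟩ := hx
    obtain ⟨qy, hqy⟩ := hy
    rw [hqx, hqy] at h ⊢
    rw [gEmb_U G U hclique i qx, gEmb_U G U hclique i qy, Sum.inl.injEq] at h
    rw [h]
  · obtain ⟨qx, hqx⟩ := hx
    rw [hqx, gEmb_U G U hclique i qx,
      gEmb_not U i y (fun q hq => hy ⟨q, hq⟩)] at h
    exact absurd h (by simp)
  · obtain ⟨qy, hqy⟩ := hy
    rw [hqy, gEmb_U G U hclique i qy,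
      gEmb_not U i x (fun q hq => hx ⟨q, hq⟩)] at h
    exact absurd h (by simp)
  · rw [gEmb_not U i x (fun q hq => hx ⟨q, hq⟩),
      gEmb_not U i y (fun q hq => hy ⟨q, hq⟩)] at h
    rw [Sum.inr.injEq] at h
    injection h with h1 h2
    exact congrArg Subtype.val h2

include hclique in
lemma gEmb_adj (i : Fin n) (x y : V i) :
    (KGlue G U).Adj (gEmb U i x) (gEmb U i y) ↔ (G i).Adj x y := by
  by_cases hx : ∃ q, x = U i q
  · obtain ⟨q, rfl⟩ := hx
    rw [gEmb_U G U hclique i q]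
    by_cases hy : ∃ q', y = U i q'
    · obtain ⟨q', rfl⟩ := hy
      rw [gEmb_U G U hclique i q']
      show q ≠ q' ↔ _
      constructor
      · exact hclique i q q'
      · intro hadj he
        rw [he] at hadj
        exact (G i).loopless.irrefl _ hadj
    · have hy' : ∀ q', y ≠ U i q' := fun q' hq' => hy ⟨q', hq'⟩
      rw [gEmb_not U i y hy']
      exact Iff.rfl
  · have hx' : ∀ q, x ≠ U i q := fun q hq => hx ⟨q, hq⟩
    rw [gEmb_not U i x hx']
    by_cases hy : ∃ q', y = U i q'
    · obtain ⟨q', rfl⟩ := hy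
      rw [gEmb_U G U hclique i q']
      exact Iff.rfl
    · have hy' : ∀ q', y ≠ U i q' := fun q' hq' => hy ⟨q', hq'⟩
      rw [gEmb_not U i y hy']
      constructor
      · rintro ⟨h, hadj⟩
        exact hadj
      · intro hadj
        exact ⟨rfl, hadj⟩

variable {m : ℕ}

include hclique in
/-- The pullback of a cover of the gluing to a cover of one of the pieces. -/
def pbCover (C : DPCover (KGlue G U) m) (i : Fin n) : DPCover (G i) m where
  H := { Adj := fun w z => C.H.Adj (gEmb U i w.1, w.2) (gEmb U i z.1, z.2)
         symm := ⟨fun w z h => SimpleGraph.Adj.symm (G := C.H) h⟩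
         loopless := ⟨fun w h => C.H.loopless.irrefl _ h⟩ }
  fiber_complete := fun v a b hab => C.fiber_complete _ a b hab
  cross := fun x y a b h =>
    (C.cross _ _ a b h).imp (fun h1 => gEmb_inj G U hclique i h1)
      (fun h1 => (gEmb_adj G U hclique i x y).mp h1)
  matching := fun x y hxy a b b' =>
    C.matching _ _ ((gEmb_adj G U hclique i x y).mpr hxy) a b b'

end Glue


theorem stmt_4 {n p : ℕ} (hn : 2 ≤ n) (hp : 1 ≤ p) {V : Fin n → Type}
    [∀ i, Fintype (V i)] [∀ i, DecidableEq (V i)]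
    (G : ∀ i, SimpleGraph (V i)) (U : ∀ i, Fin p → V i)
    (hclique : ∀ i, ∀ q q' : Fin p, q ≠ q' → (G i).Adj (U i q) (U i q'))
    (m : ℕ) (hm : 1 ≤ m) (k : Fin n → ℕ)
    (hk : ∀ (i : Fin n) (C : DPCover (G i) m) (a : Fin p → Fin m),
      (∀ q q' : Fin p, ¬ C.H.Adj (U i q, a q) (U i q', a q')) →
      k i ≤ Nat.card { f : V i → Fin m // C.IsColoring f ∧ ∀ q, f (U i q) = a q }) :
    (∏ q ∈ Finset.range p, (m - q)) * ∏ i : Fin n, k i ≤ PDP (KGlue G U) m := by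
  classical
  refine le_csInf ⟨(trivialCover (KGlue G U) m).count, trivialCover _ m, rfl⟩ ?_
  rintro N ⟨C, rfl⟩
  -- abbreviations
  set W := (Fin p) ⊕ (Σ i : Fin n, {x : V i // ∀ q, x ≠ U i q}) with hW
  -- fibers over the restriction to the glued clique
  let fib : (Fin p → Fin m) → Type := fun a =>
    {F : W → Fin m // C.IsColoring F ∧ (fun q => F (Sum.inl q)) = a}
  haveI : ∀ a, Finite (fib a) := fun a => Subtype.finite
  have e : (Σ a : Fin p → Fin m, fib a) ≃ {F : W → Fin m // C.IsColoring F} :=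
    { toFun := fun x => ⟨x.2.1, x.2.2.1⟩
      invFun := fun F => ⟨fun q => F.1 (Sum.inl q), F.1, F.2, rfl⟩
      left_inv := by rintro ⟨a, F, hF, rfl⟩; rfl
      right_inv := fun F => rfl }
  have hcount : C.count = ∑ a : Fin p → Fin m, Nat.card (fib a) := by
    rw [DPCover.count, ← Nat.card_congr e, natCard_sigma]
  -- the independence predicate on clique colorings
  set P : (Fin p → Fin m) → Prop := fun a =>
    ∀ q q' : Fin p, q ≠ q' → ¬ C.H.Adj (Sum.inl q, a q) (Sum.inl q', a q') with hP
  -- count of independent clique colorings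
  have hA : ∏ q ∈ Finset.range p, (m - q) ≤ (Finset.univ.filter P).card := by
    have h := indep_card hm
      (fun q i q' j => C.H.Adj ((Sum.inl q : W), i) (Sum.inl q', j))
      (fun q i q' j h => SimpleGraph.Adj.symm (G := C.H) h)
      (fun q q' hne i j j' h h' =>
        C.matching (Sum.inl q) (Sum.inl q')
          (show (KGlue G U).Adj (Sum.inl q) (Sum.inl q') from hne) i j j' h h')
    rw [Nat.card_eq_fintype_card, Fintype.card_subtype] at h
    exact h
  -- each fiber over an independent clique coloring is large
  have key : ∀ a : Fin p → Fin m, P a → (∏ i, k i) ≤ Nat.card (fib a) := by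
    intro a ha
    have hBa : ∀ i, k i ≤ Nat.card {g : V i → Fin m //
        (pbCover G U hclique C i).IsColoring g ∧ ∀ q, g (U i q) = a q} := by
      intro i
      apply hk i (pbCover G U hclique C i) a
      intro q q'
      show ¬ C.H.Adj (gEmb U i (U i q), a q) (gEmb U i (U i q'), a q')
      rw [gEmb_U G U hclique i q, gEmb_U G U hclique i q']
      by_cases hqq : q = q'
      · subst hqq
        exact C.H.loopless.irrefl _
      · exact ha q q' hqq
    let Ψ : (∀ i, {g : V i → Fin m //
        (pbCover G U hclique C i).IsColoring g ∧ ∀ q, g (U i q) = a q}) → fib a := by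
      intro g
      refine ⟨Sum.elim a (fun s => (g s.1).1 s.2.1), ?_, rfl⟩
      rintro (q | ⟨i, x, hx⟩) (q' | ⟨j, y, hy⟩) hadj
      · by_cases hqq : q = q'
        · subst hqq
          exact C.H.loopless.irrefl _ hadj
        · exact ha q q' hqq hadj
      · refine (g j).2.1 (U j q) y ?_
        show C.H.Adj (gEmb U j (U j q), (g j).1 (U j q)) (gEmb U j y, (g j).1 y)
        rw [gEmb_U G U hclique j q, gEmb_not U j y hy, (g j).2.2 q]
        exact hadj
      · refine (g i).2.1 x (U i q') ?_
        show C.H.Adj (gEmb U i x, (g i).1 x) (gEmb U i (U i q'), (g i).1 (U i q'))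
        rw [gEmb_U G U hclique i q', gEmb_not U i x hx, (g i).2.2 q']
        exact hadj
      · by_cases hij : i = j
        · subst hij
          refine (g i).2.1 x y ?_
          show C.H.Adj (gEmb U i x, (g i).1 x) (gEmb U i y, (g i).1 y)
          rw [gEmb_not U i x hx, gEmb_not U i y hy]
          exact hadj
        · rcases C.cross _ _ _ _ hadj with h | h
          · apply hij
            have h' := Sum.inr_injective h
            exact congrArg Sigma.fst h'
          · exact hij h.1
    have hΨinj : Function.Injective Ψ := by
      intro g g' h
      have hv : (Ψ g).1 = (Ψ g').1 := congrArg Subtype.val h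
      funext i
      apply Subtype.ext
      funext x
      by_cases hx : ∀ q, x ≠ U i q
      · exact congrFun hv (Sum.inr ⟨i, x, hx⟩)
      · push_neg at hx
        obtain ⟨q, rfl⟩ := hx
        rw [(g i).2.2 q, (g' i).2.2 q]
    calc ∏ i, k i ≤ ∏ i, Nat.card {g : V i → Fin m //
          (pbCover G U hclique C i).IsColoring g ∧ ∀ q, g (U i q) = a q} :=
        Finset.prod_le_prod' (fun i _ => hBa i)
      _ = Nat.card (∀ i, {g : V i → Fin m //
          (pbCover G U hclique C i).IsColoring g ∧ ∀ q, g (U i q) = a q}) :=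
        Nat.card_pi.symm
      _ ≤ Nat.card (fib a) := Nat.card_le_card_of_injective Ψ hΨinj
  calc (∏ q ∈ Finset.range p, (m - q)) * ∏ i : Fin n, k i
      ≤ (Finset.univ.filter P).card * ∏ i : Fin n, k i := Nat.mul_le_mul_right _ hA
    _ = ∑ _a ∈ Finset.univ.filter P, ∏ i : Fin n, k i := by
        rw [Finset.sum_const, smul_eq_mul]
    _ ≤ ∑ a ∈ Finset.univ.filter P, Nat.card (fib a) :=
        Finset.sum_le_sum (fun a ha => key a (Finset.mem_filter.mp ha).2)
    _ ≤ ∑ a : Fin p → Fin m, Nat.card (fib a) :=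
        Finset.sum_le_sum_of_subset (Finset.filter_subset _ _)
    _ = C.count := hcount.symm
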